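/- Proposition (incidence, odd case): let n ≥ 3 be odd and let z = σ ∘ p 0 1 (apply the contextual inversion p 0 1 first, then the cyclic shift σ), viewed as a permutation of Fin n → ZMod 12. Then z^(2n) = id, while z^n ≠ id. -/

import Mathlib

/-- Contextual inversion `p i j` on pitch-class segments of length `n`. -/
def p {n : ℕ} (i j : Fin n) (x : Fin n → ZMod 12) : Fin n → ZMod 12 :=
  fun r => x i + x j - x r

/-- Contextual inversion `p i j` as a permutation (it is an involution). -/
def pEquiv {n : ℕ} (i j : Fin n) : Equiv.Perm (Fin n → ZMod 12) where
  toFun := p i j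
  invFun := p i j
  left_inv x := by funext r; simp only [p]; ring
  right_inv x := by funext r; simp only [p]; ring

/-- The cyclic shift `σ`, `(σ x) r = x (r + 1)`, as a permutation. -/
def sigmaEquiv {n : ℕ} [NeZero n] : Equiv.Perm (Fin n → ZMod 12) where
  toFun x := fun r => x (r + 1)
  invFun x := fun r => x (r - 1)
  left_inv x := by funext r; simp
  right_inv x := by funext r; simp

open Fin.NatCast Fin.CommRing

lemma zkey (n : ℕ) [NeZero n] (k : ℕ) (x : Fin n → ZMod 12) (r : Fin n) :
    (((sigmaEquiv (n := n) * pEquiv 0 1) ^ k : Equiv.Perm (Fin n → ZMod 12)) x) r =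
      if k % 2 = 0 then x 0 + x (r + (k : Fin n)) - x (k : Fin n)
      else x 0 + x (k : Fin n) - x (r + (k : Fin n)) := by
  induction k generalizing r with
  | zero => simp
  | succ k ih =>
    rw [pow_succ']
    have hz : ∀ (y : Fin n → ZMod 12) (s : Fin n),
        ((sigmaEquiv (n := n) * pEquiv 0 1 : Equiv.Perm (Fin n → ZMod 12)) y) s
          = y 0 + y 1 - y (s + 1) := by
      intro y s; rfl
    rw [Equiv.Perm.mul_apply, hz, ih 0, ih 1, ih (r + 1)]
    have hc : ((k + 1 : ℕ) : Fin n) = (k : Fin n) + 1 := by push_cast; ring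
    rcases Nat.even_or_odd k with he | ho
    · have h1 : k % 2 = 0 := Nat.even_iff.mp he
      have h2 : (k + 1) % 2 = 1 := by omega
      simp only [h1, h2, if_true, if_pos rfl, hc]
      norm_num
      ring_nf
    · have h1 : k % 2 = 1 := Nat.odd_iff.mp ho
      have h2 : (k + 1) % 2 = 0 := by omega
      simp only [h1, h2, hc]
      norm_num
      ring_nf

theorem stmt17 (n : ℕ) [NeZero n] (hn : 3 ≤ n) (hodd : Odd n) :
    (sigmaEquiv (n := n) * pEquiv 0 1) ^ (2 * n) = 1 ∧
      (sigmaEquiv (n := n) * pEquiv 0 1) ^ n ≠ 1 := by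
  have hcastn : ((n : ℕ) : Fin n) = 0 := by
    simp
  constructor
  · ext x r
    rw [zkey]
    have h2 : (2 * n) % 2 = 0 := by omega
    have hcast : ((2 * n : ℕ) : Fin n) = 0 := by push_cast [hcastn]; ring
    simp [h2, hcast]
  · intro h
    have h10 : (1 : Fin n) ≠ 0 := by
      intro heq
      rw [Fin.one_eq_zero_iff] at heq
      omega
    set x : Fin n → ZMod 12 := fun r => if r = 0 then 1 else 0 with hx
    have this : (((sigmaEquiv (n := n) * pEquiv 0 1) ^ n : Equiv.Perm (Fin n → ZMod 12)) x) 1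
        = x 1 := by rw [h]; rfl
    rw [zkey] at this
    have hm : n % 2 = 1 := Nat.odd_iff.mp hodd
    simp only [hm, hcastn, add_zero, Equiv.Perm.one_apply] at this
    simp only [hx, if_pos rfl, if_neg h10] at this
    exact absurd this (by decide)
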